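/- Let H be a complex Hilbert space, let κ be a real number with 0 ≤ κ < 1, let K : H → H be a bounded self-adjoint operator with 0 ≤ ⟨K x, x⟩ ≤ κ ‖x‖² for all x ∈ H, let b ∈ H, and set β := ‖b‖². Suppose λ is a real number with λ > 1 satisfying λ − 1 = ⟨(λI − K)^{−1} b, b⟩. Then: (i) λ ≥ (1 + √(1 + 4β))/2; (ii) (λ − 1)(λ − κ) ≤ β; and (iii) λ − 1 ≤ β/(1 − κ). -/

import Mathlib

set_option maxHeartbeats 1000000 in
open scoped ComplexOrder in
/-- A priori bounds for the Schur root: if `0 ≤ K ≤ κI` with `0 ≤ κ < 1`, `β = ‖b‖²`,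
and `λ > 1` satisfies `λ − 1 = ⟨(λI−K)⁻¹b, b⟩`, then
`λ ≥ (1+√(1+4β))/2`, `(λ−1)(λ−κ) ≤ β`, and `λ − 1 ≤ β/(1−κ)`. -/
theorem stmt17 {H : Type*} [NormedAddCommGroup H] [InnerProductSpace ℂ H]
    [CompleteSpace H] (κ : ℝ) (hκ0 : 0 ≤ κ) (hκ1 : κ < 1)
    (K : H →L[ℂ] H) (hK : IsSelfAdjoint K)
    (hlow : ∀ x : H, 0 ≤ (inner ℂ x (K x) : ℂ))
    (hup : ∀ x : H, (inner ℂ x (K x) : ℂ) ≤ ((κ * ‖x‖ ^ 2 : ℝ) : ℂ))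
    (b : H) (lam : ℝ) (hlam : 1 < lam)
    (heq : (lam : ℂ) - 1
        = (inner ℂ b ((Ring.inverse ((lam : ℂ) • (1 : H →L[ℂ] H) - K)) b) : ℂ)) :
    (1 + Real.sqrt (1 + 4 * ‖b‖ ^ 2)) / 2 ≤ lam ∧
      (lam - 1) * (lam - κ) ≤ ‖b‖ ^ 2 ∧
      lam - 1 ≤ ‖b‖ ^ 2 / (1 - κ) := by
  have hsym := hK.isSymmetric
  have hlam0 : (0:ℝ) < lam := by linarith
  have hlamC : (lam : ℂ) ≠ 0 := by exact_mod_cast hlam0.ne'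
  -- real part facts
  have hre0 : ∀ x : H, 0 ≤ (inner ℂ x (K x) : ℂ).re := fun x =>
    (Complex.le_def.1 (hlow x)).1
  have hreup : ∀ x : H, (inner ℂ x (K x) : ℂ).re ≤ κ * ‖x‖ ^ 2 := by
    intro x
    have h := (Complex.le_def.1 (hup x)).1
    simpa only [Complex.ofReal_re] using h
  have hsq : ∀ x : H, (inner ℂ x x : ℂ).re = ‖x‖ ^ 2 := fun x => by
    have h := @inner_self_eq_norm_sq ℂ _ _ _ _ x
    simpa using h
  have hres : ∀ u v : H, (inner ℂ u v : ℂ).re = (inner ℂ v u : ℂ).re := fun u v => by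
    rw [← inner_conj_symm, Complex.conj_re]
  have hyx : ∀ x y : H, (inner ℂ y (K x) : ℂ).re = (inner ℂ x (K y) : ℂ).re := by
    intro x y
    have h1 := hsym y x
    simp only [ContinuousLinearMap.coe_coe] at h1
    rw [← h1, ← inner_conj_symm, Complex.conj_re]
  -- Cauchy–Schwarz for the semi-inner ℂ product ⟨x, K y⟩
  have cs : ∀ x y : H, ((inner ℂ x (K y) : ℂ).re) ^ 2
      ≤ (inner ℂ x (K x) : ℂ).re * (inner ℂ y (K y) : ℂ).re := by
    intro x y
    have key : ∀ t : ℝ, 0 ≤ (inner ℂ y (K y) : ℂ).re * (t * t)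
        + (2 * (inner ℂ x (K y) : ℂ).re) * t + (inner ℂ x (K x) : ℂ).re := by
      intro t
      have h0 := hre0 (x + (t : ℂ) • y)
      have hexp : (inner ℂ (x + (t:ℂ) • y) (K (x + (t:ℂ) • y)) : ℂ)
          = inner ℂ x (K x) + (t:ℂ) * inner ℂ x (K y) + (t:ℂ) * inner ℂ y (K x)
            + (t:ℂ) * ((t:ℂ) * inner ℂ y (K y)) := by
        simp only [map_add, map_smul, inner_add_left, inner_add_right,
          inner_smul_left, inner_smul_right, Complex.conj_ofReal]
        ring
      rw [hexp] at h0
      simp only [Complex.add_re, Complex.re_ofReal_mul] at h0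
      rw [hyx x y] at h0
      nlinarith [h0]
    have hd := discrim_le_zero key
    rw [discrim] at hd
    nlinarith [hd]
  -- ‖K y‖² ≤ κ * re⟨y, K y⟩
  have hKy : ∀ y : H, ‖K y‖ ^ 2 ≤ κ * (inner ℂ y (K y) : ℂ).re := by
    intro y
    rcases eq_or_ne (K y) 0 with h | h
    · rw [h]
      simp
    · have h1 := cs (K y) y
      have h2 : (inner ℂ (K y) (K y) : ℂ).re = ‖K y‖ ^ 2 := hsq (K y)
      have h3 : (inner ℂ (K y) (K (K y)) : ℂ).re ≤ κ * ‖K y‖ ^ 2 := hreup (K y)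
      have h4 : 0 < ‖K y‖ ^ 2 := by
        have := norm_pos_iff.mpr h
        positivity
      rw [h2] at h1
      nlinarith [hre0 y, h1, h3, h4]
  -- ‖K‖ ≤ κ
  have hKnorm : ‖K‖ ≤ κ := by
    refine K.opNorm_le_bound hκ0 (fun y => ?_)
    have h1 : ‖K y‖ ^ 2 ≤ (κ * ‖y‖) ^ 2 := by
      have := hKy y
      have := hreup y
      nlinarith
    exact (pow_le_pow_iff_left₀ (norm_nonneg _) (by positivity) two_ne_zero).1 h1
  -- T is invertible
  set T : H →L[ℂ] H := (lam : ℂ) • (1 : H →L[ℂ] H) - K with hTdef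
  have hunit : IsUnit T := by
    have hnlt : ‖(lam:ℂ)⁻¹ • K‖ < 1 := by
      rw [norm_smul, norm_inv, Complex.norm_real]
      rw [Real.norm_eq_abs, abs_of_pos hlam0]
      calc lam⁻¹ * ‖K‖ ≤ lam⁻¹ * κ := by
            have := inv_pos.2 hlam0
            nlinarith
        _ < 1 := by
            rw [← mul_lt_mul_iff_right₀ hlam0, mul_one, ← mul_assoc,
              mul_inv_cancel₀ hlam0.ne', one_mul]
            linarith
    have hu1 : IsUnit (1 - (lam:ℂ)⁻¹ • K) := (Units.oneSub _ hnlt).isUnit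
    have hu2 : IsUnit ((lam:ℂ) • (1 : H →L[ℂ] H)) := by
      rw [← Algebra.algebraMap_eq_smul_one]
      exact (isUnit_iff_ne_zero.2 hlamC).map (algebraMap ℂ (H →L[ℂ] H))
    have hfac : T = ((lam:ℂ) • (1 : H →L[ℂ] H)) * (1 - (lam:ℂ)⁻¹ • K) := by
      rw [hTdef, mul_sub, mul_one, smul_one_mul, smul_smul,
        mul_inv_cancel₀ hlamC, one_smul]
    rw [hfac]
    exact hu2.mul hu1
  set y : H := Ring.inverse T b with hydef
  have hTy : T y = b := by
    rw [hydef, ← ContinuousLinearMap.mul_apply, Ring.mul_inverse_cancel T hunit,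
      ContinuousLinearMap.one_apply]
  have hb : b = (lam : ℂ) • y - K y := by
    rw [← hTy, hTdef]
    simp [ContinuousLinearMap.sub_apply, ContinuousLinearMap.smul_apply]
  set n : ℝ := ‖y‖ ^ 2 with hndef
  set r : ℝ := (inner ℂ y (K y) : ℂ).re with hrdef
  have hn0 : 0 ≤ n := by positivity
  have hr0 : 0 ≤ r := hre0 y
  have hrκ : r ≤ κ * n := hreup y
  have hinner : (inner ℂ b y : ℂ).re = lam * n - r := by
    rw [hb]
    simp only [inner_sub_left, inner_smul_left, Complex.conj_ofReal, Complex.sub_re,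
      Complex.re_ofReal_mul]
    rw [hsq y, hres (K y) y, hndef, hrdef]
  have heqre : lam - 1 = lam * n - r := by
    have h := congrArg Complex.re heq
    simp only [Complex.sub_re, Complex.ofReal_re, Complex.one_re] at h
    exact h.trans hinner
  have hlam1 : 0 < lam - 1 := by linarith
  -- Cauchy–Schwarz: (lam-1)² ≤ n * ‖b‖²
  have hCS2 : (lam - 1) ^ 2 ≤ n * ‖b‖ ^ 2 := by
    have h1 : lam - 1 ≤ ‖b‖ * ‖y‖ := by
      have h2 : (inner ℂ b y : ℂ).re ≤ ‖(inner ℂ b y : ℂ)‖ := by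
        exact Complex.re_le_norm _
      have h3 : ‖(inner ℂ b y : ℂ)‖ ≤ ‖b‖ * ‖y‖ := norm_inner_le_norm b y
      have h4 : lam - 1 = (inner ℂ b y : ℂ).re := by
        have h := congrArg Complex.re heq
        simpa only [Complex.sub_re, Complex.ofReal_re, Complex.one_re] using h
      linarith
    have := norm_nonneg b
    have := norm_nonneg y
    nlinarith [h1]
  -- ‖b‖² = lam² n - 2 lam r + ‖K y‖²
  have hb2 : ‖b‖ ^ 2 = lam ^ 2 * n - 2 * lam * r + ‖K y‖ ^ 2 := by
    have h1 : ‖b‖ ^ 2 = (inner ℂ b b : ℂ).re := (hsq b).symm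
    rw [h1]
    nth_rewrite 1 [hb]
    nth_rewrite 1 [hb]
    simp only [inner_sub_left, inner_sub_right, inner_smul_left, inner_smul_right,
      Complex.conj_ofReal, Complex.sub_re, Complex.add_re, Complex.re_ofReal_mul]
    rw [hsq y, hsq (K y), hres (K y) y, hndef, hrdef]
    ring
  have hKy2 : ‖K y‖ ^ 2 ≤ κ * r := hKy y
  -- (i): ‖b‖² ≤ lam (lam - 1)
  have hi : ‖b‖ ^ 2 ≤ lam * (lam - 1) := by
    have : ‖K y‖ ^ 2 ≤ lam * r := by nlinarith
    nlinarith [heqre]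
  refine ⟨?_, ?_, ?_⟩
  · have hsq : Real.sqrt (1 + 4 * ‖b‖ ^ 2) ≤ 2 * lam - 1 := by
      have h1 : (1 + 4 * ‖b‖ ^ 2) ≤ (2 * lam - 1) ^ 2 := by nlinarith [hi]
      calc Real.sqrt (1 + 4 * ‖b‖ ^ 2) ≤ Real.sqrt ((2 * lam - 1) ^ 2) :=
            Real.sqrt_le_sqrt h1
        _ = 2 * lam - 1 := Real.sqrt_sq (by linarith)
    linarith
  · -- (λ-1)(λ-κ) ≤ β
    have h2 : (lam - κ) * n ≤ lam - 1 := by nlinarith [heqre, hrκ, hn0]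
    nlinarith [hCS2, h2, mul_nonneg hn0 (sq_nonneg ‖b‖),
      mul_le_mul_of_nonneg_right h2 (sq_nonneg ‖b‖)]
  · rw [le_div_iff₀ (by linarith : (0:ℝ) < 1 - κ)]
    nlinarith [hCS2, (by nlinarith [heqre, hrκ, hn0] : (lam - κ) * n ≤ lam - 1), hn0, sq_nonneg ‖b‖]
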